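/- Linear independence constraint qualification for the master problem. Let N ∈ ℕ, δ̄ > 0, 0 ≤ m < 1 < M, let b ∈ ℝ^N have strictly positive entries, and let h : [m·δ̄, M·δ̄] → ℝ be differentiable with h'(σ) < 0 for every σ in the open interval (m·δ̄, M·δ̄). Let δ ∈ [m·δ̄, M·δ̄]^N and suppose there exists an index k₀ with m·δ̄ < δ_{k₀} < M·δ̄. Then the family of vectors in ℝ^N consisting of the vector g = (b_0 h'(δ_0), …, b_{N−1} h'(δ_{N−1})) together with the standard basis vectors e_k for every index k at which a bound constraint is active (i.e. δ_k = m·δ̄ or δ_k = M·δ̄) is linearly independent. -/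

import Mathlib

/-- Linear independence constraint qualification for the master problem. -/
theorem licq_master_problem
    (N : ℕ) (δbar m M : ℝ)
    (hδbar : 0 < δbar) (hm : 0 ≤ m) (hm1 : m < 1) (hM : 1 < M)
    (b : Fin N → ℝ) (hb : ∀ k, 0 < b k)
    (h h' : ℝ → ℝ)
    (h_deriv : ∀ σ ∈ Set.Icc (m * δbar) (M * δbar),
      HasDerivWithinAt h (h' σ) (Set.Icc (m * δbar) (M * δbar)) σ)
    (h'_neg : ∀ σ ∈ Set.Ioo (m * δbar) (M * δbar), h' σ < 0)
    (δ : Fin N → ℝ)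
    (hfeas : ∀ k, δ k ∈ Set.Icc (m * δbar) (M * δbar))
    (k₀ : Fin N) (hk₀ : δ k₀ ∈ Set.Ioo (m * δbar) (M * δbar)) :
    LinearIndependent ℝ
      (fun i : Option {k : Fin N // δ k = m * δbar ∨ δ k = M * δbar} =>
        match i with
        | none => (fun k => b k * h' (δ k) : Fin N → ℝ)
        | some k => (Pi.single k.1 1 : Fin N → ℝ)) := by

  rw [linearIndependent_option]
  constructor
  · have hli : LinearIndependent ℝ (fun k : Fin N => (Pi.single k 1 : Fin N → ℝ)) := by
      have := (Pi.basisFun ℝ (Fin N)).linearIndependent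
      have heq : (fun k : Fin N => (Pi.single k 1 : Fin N → ℝ)) = ⇑(Pi.basisFun ℝ (Fin N)) := by
        funext k
        simp [Pi.basisFun_apply]
      rw [heq]; exact this
    exact hli.comp _ Subtype.val_injective
  · intro hmem
    have hsub : Submodule.span ℝ
        (Set.range (fun k : {k : Fin N // δ k = m * δbar ∨ δ k = M * δbar} =>
          (Pi.single k.1 1 : Fin N → ℝ))) ≤
        LinearMap.ker (LinearMap.proj (R := ℝ) (φ := fun _ : Fin N => ℝ) k₀) := by
      rw [Submodule.span_le]
      rintro _ ⟨k, rfl⟩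
      have hk : k.1 ≠ k₀ := by
        intro he
        rcases k.2 with h1 | h1 <;> rw [he] at h1
        · exact absurd h1 (ne_of_gt hk₀.1)
        · exact absurd h1 (ne_of_lt hk₀.2)
      simp [LinearMap.mem_ker, Pi.single_apply, hk]
    have := hsub hmem
    simp only [LinearMap.mem_ker, LinearMap.proj_apply] at this
    have hne : b k₀ * h' (δ k₀) ≠ 0 :=
      mul_ne_zero (ne_of_gt (hb k₀)) (ne_of_lt (h'_neg _ hk₀))
    exact hne this
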